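/- Let T_1 be the rooted labeled path on n ≥ 3 vertices with edges {1,2}, {1,3}, and {i,i+1} for 3 ≤ i ≤ n-1. With respect to the reverse lexicographic order induced by x_1 > x_2 > ... > x_{n+1}, the set {x_1x_2x_4 - x_1x_3^2, g_{12}, g_{13}, g_{i,i+1} (3 ≤ i ≤ n-1)} is a Gröbner basis of I_{T_1}, and hence ini(I_{T_1}) = (x_2x_3, x_1x_3^2, x_2^2, x_{i+1}^2 : 3 ≤ i ≤ n-1). -/

import Mathlib

open MvPolynomial

/-- The Hankel binomial `g_{ij} = x_i x_{j+1} - x_j x_{i+1}` (0-indexed vertices). -/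
noncomputable def hg (n : ℕ) (K : Type*) [Field K] (i j : Fin n) :
    MvPolynomial (Fin (n + 1)) K :=
  X i.castSucc * X j.succ - X j.castSucc * X i.succ

/-- The generating set of the Hankel edge ideal of a graph `G` on `[n]`. -/
noncomputable def hgenSet (n : ℕ) (K : Type*) [Field K] (G : SimpleGraph (Fin n)) :
    Set (MvPolynomial (Fin (n + 1)) K) :=
  { f | ∃ i j : Fin n, i < j ∧ G.Adj i j ∧ f = hg n K i j }

/-- The Hankel edge ideal `I_G`. -/
noncomputable def hankelIdeal (n : ℕ) (K : Type*) [Field K] (G : SimpleGraph (Fin n)) :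
    Ideal (MvPolynomial (Fin (n + 1)) K) :=
  Ideal.span (hgenSet n K G)

/-- `I_X`, the ideal of 2-minors of the 2×n Hankel matrix, i.e. `I_{K_n}`. -/
noncomputable def IX (n : ℕ) (K : Type*) [Field K] :
    Ideal (MvPolynomial (Fin (n + 1)) K) :=
  hankelIdeal n K ⊤

/-- The height of an ideal: the infimum of the heights of primes containing it. -/
noncomputable def ht {R : Type*} [CommRing R] (I : Ideal R) : ℕ∞ :=
  ⨅ (p : PrimeSpectrum R) (_ : I ≤ p.asIdeal), Order.height p

/-- The minimal number of generators of an ideal. -/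
noncomputable def mu {R : Type*} [CommRing R] (I : Ideal R) : ℕ∞ :=
  ⨅ (s : Finset R) (_ : Ideal.span (s : Set R) = I), (s.card : ℕ∞)

/-- The arithmetical rank of an ideal. -/
noncomputable def ara {R : Type*} [CommRing R] (I : Ideal R) : ℕ∞ :=
  ⨅ (s : Finset R) (_ : (Ideal.span (s : Set R)).radical = I.radical), (s.card : ℕ∞)

/-- The labeled path `L_n` with edges `{i, i+1}` (0-indexed). -/
def pathG (n : ℕ) : SimpleGraph (Fin n) :=
  SimpleGraph.fromRel (fun i j => (i : ℕ) + 1 = (j : ℕ))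

/-- The labeled cycle `C_n` with edges `{i, i+1}` and `{0, n-1}` (0-indexed). -/
def cycleG (n : ℕ) : SimpleGraph (Fin n) :=
  SimpleGraph.fromRel (fun i j =>
    (i : ℕ) + 1 = (j : ℕ) ∨ ((i : ℕ) = 0 ∧ (j : ℕ) = n - 1))

/-- The monomial prime ideal generated by the variables with index in `[lo, hi]` (0-indexed). -/
noncomputable def Pvars (n : ℕ) (K : Type*) [Field K] (lo hi : ℕ) :
    Ideal (MvPolynomial (Fin (n + 1)) K) :=
  Ideal.span { f | ∃ i : Fin (n + 1), lo ≤ (i : ℕ) ∧ (i : ℕ) ≤ hi ∧ f = X i }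

/-- The rooted labeled path `T₁` on `[n]` (1-based edges `{1,2}, {1,3}, {i,i+1}` for
`3 ≤ i ≤ n-1`; here 0-indexed). -/
def T1graph (n : ℕ) : SimpleGraph (Fin n) :=
  SimpleGraph.fromRel (fun i j =>
    ((i : ℕ) = 0 ∧ (j : ℕ) = 1) ∨ ((i : ℕ) = 0 ∧ (j : ℕ) = 2) ∨
      (2 ≤ (i : ℕ) ∧ (j : ℕ) = (i : ℕ) + 1))

/-- Total degree of a monomial (exponent vector). -/
def mdeg {n : ℕ} (m : Fin n →₀ ℕ) : ℕ := m.sum fun _ e => e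

/-- The (degree) reverse lexicographic order induced by `x_1 > x_2 > ⋯`: `a < b` iff
`a` has smaller degree, or degrees agree and at the largest index where they differ,
`a` has the larger exponent. -/
def revLexLT {n : ℕ} (a b : Fin n →₀ ℕ) : Prop :=
  mdeg a < mdeg b ∨
    (mdeg a = mdeg b ∧ ∃ k : Fin n, b k < a k ∧ ∀ l : Fin n, k < l → a l = b l)

/-- `m` is the leading monomial of `f` w.r.t. the reverse lexicographic order. -/
def IsLeadMonomial {n : ℕ} {K : Type*} [Field K]
    (f : MvPolynomial (Fin n) K) (m : Fin n →₀ ℕ) : Prop :=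
  m ∈ f.support ∧ ∀ m' ∈ f.support, m' = m ∨ revLexLT m' m

/-- The initial ideal of `I` w.r.t. the reverse lexicographic order: the ideal generated by
the leading monomials of the nonzero elements of `I`. -/
noncomputable def initialIdeal {n : ℕ} (K : Type*) [Field K]
    (I : Ideal (MvPolynomial (Fin n) K)) : Ideal (MvPolynomial (Fin n) K) :=
  Ideal.span { p | ∃ f ∈ I, ∃ m, IsLeadMonomial f m ∧ p = monomial m 1 }

/-- `B` is a Gröbner basis of `I` w.r.t. the reverse lexicographic order: `B ⊆ I` and the
leading monomials of the elements of `B` generate the initial ideal of `I`. -/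
def IsGroebnerBasis {n : ℕ} (K : Type*) [Field K]
    (B : Set (MvPolynomial (Fin n) K)) (I : Ideal (MvPolynomial (Fin n) K)) : Prop :=
  B ⊆ (I : Set (MvPolynomial (Fin n) K)) ∧
    initialIdeal K I =
      Ideal.span { p | ∃ f ∈ B, ∃ m, IsLeadMonomial f m ∧ p = monomial m 1 }

namespace Aux17

open Finsupp Relation

/-- the exponent vector of `x_k` (0-indexed), as a `Finsupp`. -/
noncomputable def sv (n k : ℕ) : Fin (n+1) →₀ ℕ :=
  Finsupp.single ⟨k % (n+1), Nat.mod_lt _ n.succ_pos⟩ 1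

lemma sv_apply' {n : ℕ} (k : ℕ) (x : Fin (n+1)) :
    sv n k x = if k % (n+1) = (x : ℕ) then 1 else 0 := by
  simp [sv, Finsupp.single_apply, Fin.ext_iff]

lemma single_eq_sv {n : ℕ} {x : Fin (n+1)} {k : ℕ} (hk : k < n+1) (hx : (x : ℕ) = k) :
    Finsupp.single x (1:ℕ) = sv n k := by
  rw [sv]
  congr 1
  exact Fin.ext (by simp [hx, Nat.mod_eq_of_lt hk])

/-- The rewriting rules (larger monomial, smaller monomial). -/
inductive Rule (n : ℕ) : (Fin (n+1) →₀ ℕ) → (Fin (n+1) →₀ ℕ) → Prop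
  | A : Rule n (sv n 1 + sv n 1) (sv n 0 + sv n 2)
  | B : Rule n (sv n 1 + sv n 2) (sv n 0 + sv n 3)
  | C (k : ℕ) (h3 : 3 ≤ k) (hk : k ≤ n - 1) :
      Rule n (sv n k + sv n k) (sv n (k-1) + sv n (k+1))
  | D : Rule n (sv n 0 + (sv n 2 + sv n 2)) (sv n 0 + (sv n 1 + sv n 3))

def Step (n : ℕ) (u v : Fin (n+1) →₀ ℕ) : Prop :=
  ∃ c a b, Rule n a b ∧ u = c + a ∧ v = c + b

lemma mdeg_add {n : ℕ} (a b : Fin n →₀ ℕ) : mdeg (a+b) = mdeg a + mdeg b :=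
  Finsupp.sum_add_index' (fun _ => rfl) (fun _ _ _ => rfl)

lemma mdeg_sv {n k : ℕ} : mdeg (sv n k) = 1 :=
  Finsupp.sum_single_index rfl

lemma rl_irrefl {n : ℕ} (a : Fin n →₀ ℕ) : ¬ revLexLT a a := by
  rintro (h | ⟨-, k, hk, -⟩)
  · omega
  · omega

lemma rl_trans {n : ℕ} {a b c : Fin n →₀ ℕ} (h₁ : revLexLT a b) (h₂ : revLexLT b c) :
    revLexLT a c := by
  rcases h₁ with h₁ | ⟨e₁, k₁, hk₁, hl₁⟩
  · rcases h₂ with h₂ | ⟨e₂, -⟩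
    · exact Or.inl (by omega)
    · exact Or.inl (by omega)
  · rcases h₂ with h₂ | ⟨e₂, k₂, hk₂, hl₂⟩
    · exact Or.inl (by omega)
    · refine Or.inr ⟨by omega, ?_⟩
      rcases lt_trichotomy k₁ k₂ with h | h | h
      · exact ⟨k₂, by rw [hl₁ _ h]; exact hk₂, fun l hl => by
          rw [hl₁ _ (h.trans hl), hl₂ _ hl]⟩
      · subst h
        exact ⟨k₁, by omega, fun l hl => by rw [hl₁ _ hl, hl₂ _ hl]⟩
      · exact ⟨k₁, by rw [← hl₂ _ h]; exact hk₁, fun l hl => by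
          rw [hl₁ _ hl, hl₂ _ (h.trans hl)]⟩

lemma rl_asymm {n : ℕ} {a b : Fin n →₀ ℕ} (h : revLexLT a b) : ¬ revLexLT b a :=
  fun h' => rl_irrefl a (rl_trans h h')

lemma rl_add {n : ℕ} (c : Fin n →₀ ℕ) {a b : Fin n →₀ ℕ} (h : revLexLT a b) :
    revLexLT (c+a) (c+b) := by
  rcases h with h | ⟨e, k, hk, hl⟩
  · exact Or.inl (by rw [mdeg_add, mdeg_add]; omega)
  · refine Or.inr ⟨by rw [mdeg_add, mdeg_add]; omega, k, ?_, fun l hl' => ?_⟩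
    · simp only [Finsupp.add_apply]; omega
    · simp only [Finsupp.add_apply]; rw [hl _ hl']

lemma rule_lt {n : ℕ} (hn : 3 ≤ n) {a b : Fin (n+1) →₀ ℕ} (hr : Rule n a b) :
    revLexLT b a := by
  have e0 : 0 % (n+1) = 0 := Nat.mod_eq_of_lt (by omega)
  have e1 : 1 % (n+1) = 1 := Nat.mod_eq_of_lt (by omega)
  have e2 : 2 % (n+1) = 2 := Nat.mod_eq_of_lt (by omega)
  have e3 : 3 % (n+1) = 3 := Nat.mod_eq_of_lt (by omega)
  cases hr with
  | A =>
    refine Or.inr ⟨by simp [mdeg_add, mdeg_sv], ⟨2, by omega⟩, ?_, fun l hl => ?_⟩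
    · simp only [Finsupp.add_apply, sv_apply', e0, e1, e2]
      norm_num
    · have hl' : 2 < (l : ℕ) := hl
      simp only [Finsupp.add_apply, sv_apply', e0, e1, e2]
      split_ifs <;> omega
  | B =>
    refine Or.inr ⟨by simp [mdeg_add, mdeg_sv], ⟨3, by omega⟩, ?_, fun l hl => ?_⟩
    · simp only [Finsupp.add_apply, sv_apply', e0, e1, e2, e3]
      norm_num
    · have hl' : 3 < (l : ℕ) := hl
      simp only [Finsupp.add_apply, sv_apply', e0, e1, e2, e3]
      split_ifs <;> omega
  | C k h3 hk =>
    have ek : k % (n+1) = k := Nat.mod_eq_of_lt (by omega)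
    have ekm : (k-1) % (n+1) = k-1 := Nat.mod_eq_of_lt (by omega)
    have ekp : (k+1) % (n+1) = k+1 := Nat.mod_eq_of_lt (by omega)
    refine Or.inr ⟨by simp [mdeg_add, mdeg_sv], ⟨k+1, by omega⟩, ?_, fun l hl => ?_⟩
    · simp only [Finsupp.add_apply, sv_apply', ek, ekm, ekp]
      split_ifs <;> omega
    · have hl' : k+1 < (l : ℕ) := hl
      simp only [Finsupp.add_apply, sv_apply', ek, ekm, ekp]
      split_ifs <;> omega
  | D =>
    refine Or.inr ⟨by simp [mdeg_add, mdeg_sv], ⟨3, by omega⟩, ?_, fun l hl => ?_⟩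
    · simp only [Finsupp.add_apply, sv_apply', e0, e1, e2, e3]
      norm_num
    · have hl' : 3 < (l : ℕ) := hl
      simp only [Finsupp.add_apply, sv_apply', e0, e1, e2, e3]
      split_ifs <;> omega

lemma step_lt {n : ℕ} (hn : 3 ≤ n) {u v : Fin (n+1) →₀ ℕ} (h : Step n u v) :
    revLexLT v u := by
  obtain ⟨c, a, b, hr, rfl, rfl⟩ := h
  exact rl_add c (rule_lt hn hr)

lemma rtg_lt {n : ℕ} (hn : 3 ≤ n) {u v : Fin (n+1) →₀ ℕ}
    (h : Relation.ReflTransGen (Step n) u v) : u = v ∨ revLexLT v u := by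
  induction h with
  | refl => exact Or.inl rfl
  | tail hab hbc ih =>
    rcases ih with rfl | h'
    · exact Or.inr (step_lt hn hbc)
    · exact Or.inr (rl_trans (step_lt hn hbc) h')

lemma step_ctx {n : ℕ} (c : Fin (n+1) →₀ ℕ) {a b : Fin (n+1) →₀ ℕ} (hr : Rule n a b) :
    Step n (c+a) (c+b) := ⟨c, a, b, hr, rfl, rfl⟩

lemma step_shift {n : ℕ} (u : Fin (n+1) →₀ ℕ) {a b : Fin (n+1) →₀ ℕ} (h : Step n a b) :
    Step n (u+a) (u+b) := by
  obtain ⟨c, a', b', hr, rfl, rfl⟩ := h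
  exact ⟨u+c, a', b', hr, by rw [add_assoc], by rw [add_assoc]⟩

section SC

variable {n : ℕ}

/-- joinability with at most one step on each side -/
def Jn (n : ℕ) (p q : Fin (n+1) →₀ ℕ) : Prop :=
  ∃ d, Relation.ReflGen (Step n) p d ∧ Relation.ReflGen (Step n) q d

lemma H_supply {a₁ b₁ a₂ b₂ c₁ c₂ m : Fin (n+1) →₀ ℕ}
    (hr₁ : Rule n a₁ b₁) (hr₂ : Rule n a₂ b₂)
    (h₁ : m = c₁ + a₁) (h₂ : m = c₂ + a₂) (hle : a₁ + a₂ ≤ m) :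
    Jn n (c₁ + b₁) (c₂ + b₂) := by
  obtain ⟨e, he⟩ := exists_add_of_le hle
  have hc₁ : c₁ = e + a₂ := by
    have h : c₁ + a₁ = (e + a₂) + a₁ := by rw [← h₁, he]; abel
    exact add_right_cancel h
  have hc₂ : c₂ = e + a₁ := by
    have h : c₂ + a₂ = (e + a₁) + a₂ := by rw [← h₂, he]; abel
    exact add_right_cancel h
  refine ⟨e + b₁ + b₂, Relation.ReflGen.single ?_, Relation.ReflGen.single ?_⟩
  · have h := step_ctx (e + b₁) hr₂
    have e1 : c₁ + b₁ = e + b₁ + a₂ := by rw [hc₁]; abel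
    rwa [← e1] at h
  · have h := step_ctx (e + b₂) hr₁
    have e1 : c₂ + b₂ = e + b₂ + a₁ := by rw [hc₂]; abel
    have e2 : e + b₂ + b₁ = e + b₁ + b₂ := by abel
    rwa [← e1, e2] at h

lemma H_disj {a₁ b₁ a₂ b₂ c₁ c₂ m : Fin (n+1) →₀ ℕ}
    (hr₁ : Rule n a₁ b₁) (hr₂ : Rule n a₂ b₂)
    (h₁ : m = c₁ + a₁) (h₂ : m = c₂ + a₂)
    (hd : ∀ x, a₂ x ≠ 0 → a₁ x = 0) :
    Jn n (c₁ + b₁) (c₂ + b₂) := by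
  refine H_supply hr₁ hr₂ h₁ h₂ ?_
  rw [Finsupp.le_def]
  intro x
  have hx₁ : m x = c₁ x + a₁ x := by rw [h₁]; simp [Finsupp.add_apply]
  have hx₂ : m x = c₂ x + a₂ x := by rw [h₂]; simp [Finsupp.add_apply]
  by_cases h : a₂ x = 0
  · simp only [Finsupp.add_apply]; omega
  · have := hd x h
    simp only [Finsupp.add_apply]; omega

lemma sc_same {a b c₁ c₂ m : Fin (n+1) →₀ ℕ}
    (h₁ : m = c₁ + a) (h₂ : m = c₂ + a) : Jn n (c₁ + b) (c₂ + b) := by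
  have : c₁ + a = c₂ + a := by rw [← h₁, ← h₂]
  have : c₁ = c₂ := add_right_cancel this
  subst this
  exact ⟨c₁ + b, Relation.ReflGen.refl, Relation.ReflGen.refl⟩

lemma sc_AB (hn : 3 ≤ n) {c₁ c₂ m : Fin (n+1) →₀ ℕ}
    (h₁ : m = c₁ + (sv n 1 + sv n 1)) (h₂ : m = c₂ + (sv n 1 + sv n 2)) :
    Jn n (c₁ + (sv n 0 + sv n 2)) (c₂ + (sv n 0 + sv n 3)) := by
  have e0 : 0 % (n+1) = 0 := Nat.mod_eq_of_lt (by omega)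
  have e1 : 1 % (n+1) = 1 := Nat.mod_eq_of_lt (by omega)
  have e2 : 2 % (n+1) = 2 := Nat.mod_eq_of_lt (by omega)
  by_cases h0 : c₁ ⟨1, by omega⟩ = 0
  · -- critical overlap
    have hle : (sv n 1 + sv n 1) + sv n 2 ≤ m := by
      rw [Finsupp.le_def]
      intro x
      have hx₁ : m x = c₁ x + ((sv n 1 x) + (sv n 1 x)) := by
        rw [h₁]; simp [Finsupp.add_apply]
      have hx₂ : m x = c₂ x + ((sv n 1 x) + (sv n 2 x)) := by
        rw [h₂]; simp [Finsupp.add_apply]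
      by_cases hx : (x : ℕ) = 1
      · have hcx : c₁ x = 0 := by
          have : x = (⟨1, by omega⟩ : Fin (n+1)) := Fin.ext (by simpa using hx)
          rw [this]; exact h0
        simp only [Finsupp.add_apply, sv_apply', e1, e2] at *
        split_ifs at * <;> omega
      · simp only [Finsupp.add_apply, sv_apply', e1, e2] at *
        split_ifs at * <;> omega
    obtain ⟨e, he⟩ := exists_add_of_le hle
    have hc₁ : c₁ = e + sv n 2 := by
      have h : c₁ + (sv n 1 + sv n 1) = (e + sv n 2) + (sv n 1 + sv n 1) := by
        rw [← h₁, he]; abel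
      exact add_right_cancel h
    have hc₂ : c₂ = e + sv n 1 := by
      have h : c₂ + (sv n 1 + sv n 2) = (e + sv n 1) + (sv n 1 + sv n 2) := by
        rw [← h₂, he]; abel
      exact add_right_cancel h
    refine ⟨e + (sv n 0 + (sv n 1 + sv n 3)), Relation.ReflGen.single ?_, ?_⟩
    · have h := step_ctx e (Rule.D (n := n))
      have e1' : c₁ + (sv n 0 + sv n 2) = e + (sv n 0 + (sv n 2 + sv n 2)) := by
        rw [hc₁]; abel
      rwa [← e1'] at h
    · have e2' : c₂ + (sv n 0 + sv n 3) = e + (sv n 0 + (sv n 1 + sv n 3)) := by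
        rw [hc₂]; abel
      rw [e2']
  · refine H_supply Rule.A Rule.B h₁ h₂ ?_
    rw [Finsupp.le_def]
    intro x
    have hx₁ : m x = c₁ x + ((sv n 1 x) + (sv n 1 x)) := by
      rw [h₁]; simp [Finsupp.add_apply]
    have hx₂ : m x = c₂ x + ((sv n 1 x) + (sv n 2 x)) := by
      rw [h₂]; simp [Finsupp.add_apply]
    by_cases hx : (x : ℕ) = 1
    · have hcx : c₁ x ≠ 0 := by
        have : x = (⟨1, by omega⟩ : Fin (n+1)) := Fin.ext (by simpa using hx)
        rw [this]; exact h0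
      simp only [Finsupp.add_apply, sv_apply', e1, e2] at *
      split_ifs at * <;> omega
    · simp only [Finsupp.add_apply, sv_apply', e1, e2] at *
      split_ifs at * <;> omega

lemma sc_BD (hn : 3 ≤ n) {c₁ c₂ m : Fin (n+1) →₀ ℕ}
    (h₁ : m = c₁ + (sv n 1 + sv n 2)) (h₂ : m = c₂ + (sv n 0 + (sv n 2 + sv n 2))) :
    Jn n (c₁ + (sv n 0 + sv n 3)) (c₂ + (sv n 0 + (sv n 1 + sv n 3))) := by
  have e0 : 0 % (n+1) = 0 := Nat.mod_eq_of_lt (by omega)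
  have e1 : 1 % (n+1) = 1 := Nat.mod_eq_of_lt (by omega)
  have e2 : 2 % (n+1) = 2 := Nat.mod_eq_of_lt (by omega)
  by_cases h0 : c₂ ⟨2, by omega⟩ = 0
  · -- critical overlap : m = c + x0 x1 x2^2
    have hle : (sv n 0 + (sv n 1 + (sv n 2 + sv n 2))) ≤ m := by
      rw [Finsupp.le_def]
      intro x
      have hx₁ : m x = c₁ x + ((sv n 1 x) + (sv n 2 x)) := by
        rw [h₁]; simp [Finsupp.add_apply]
      have hx₂ : m x = c₂ x + ((sv n 0 x) + ((sv n 2 x) + (sv n 2 x))) := by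
        rw [h₂]; simp [Finsupp.add_apply]
      by_cases hx : (x : ℕ) = 2
      · have hcx : c₂ x = 0 := by
          have : x = (⟨2, by omega⟩ : Fin (n+1)) := Fin.ext (by simpa using hx)
          rw [this]; exact h0
        simp only [Finsupp.add_apply, sv_apply', e0, e1, e2] at *
        split_ifs at * <;> omega
      · simp only [Finsupp.add_apply, sv_apply', e0, e1, e2] at *
        split_ifs at * <;> omega
    obtain ⟨e, he⟩ := exists_add_of_le hle
    have hc₁ : c₁ = e + (sv n 0 + sv n 2) := by
      have h : c₁ + (sv n 1 + sv n 2) = (e + (sv n 0 + sv n 2)) + (sv n 1 + sv n 2) := by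
        rw [← h₁, he]; abel
      exact add_right_cancel h
    have hc₂ : c₂ = e + sv n 1 := by
      have h : c₂ + (sv n 0 + (sv n 2 + sv n 2)) =
          (e + sv n 1) + (sv n 0 + (sv n 2 + sv n 2)) := by
        rw [← h₂, he]; abel
      exact add_right_cancel h
    refine ⟨e + (sv n 0 + (sv n 0 + (sv n 2 + sv n 3))), ?_, Relation.ReflGen.single ?_⟩
    · have e1' : c₁ + (sv n 0 + sv n 3) = e + (sv n 0 + (sv n 0 + (sv n 2 + sv n 3))) := by
        rw [hc₁]; abel
      rw [e1']
    · have h := step_ctx (e + (sv n 0 + sv n 3)) (Rule.A (n := n))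
      have e1' : c₂ + (sv n 0 + (sv n 1 + sv n 3)) =
          e + (sv n 0 + sv n 3) + (sv n 1 + sv n 1) := by
        rw [hc₂]; abel
      have e2' : e + (sv n 0 + sv n 3) + (sv n 0 + sv n 2) =
          e + (sv n 0 + (sv n 0 + (sv n 2 + sv n 3))) := by abel
      rwa [← e1', e2'] at h
  · refine H_supply Rule.B Rule.D h₁ h₂ ?_
    rw [Finsupp.le_def]
    intro x
    have hx₁ : m x = c₁ x + ((sv n 1 x) + (sv n 2 x)) := by
      rw [h₁]; simp [Finsupp.add_apply]
    have hx₂ : m x = c₂ x + ((sv n 0 x) + ((sv n 2 x) + (sv n 2 x))) := by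
      rw [h₂]; simp [Finsupp.add_apply]
    by_cases hx : (x : ℕ) = 2
    · have hcx : c₂ x ≠ 0 := by
        have : x = (⟨2, by omega⟩ : Fin (n+1)) := Fin.ext (by simpa using hx)
        rw [this]; exact h0
      simp only [Finsupp.add_apply, sv_apply', e0, e1, e2] at *
      split_ifs at * <;> omega
    · simp only [Finsupp.add_apply, sv_apply', e0, e1, e2] at *
      split_ifs at * <;> omega

end SC


section SC2
variable {n : ℕ}

lemma jn_swap {p q : Fin (n+1) →₀ ℕ} (h : Jn n p q) : Jn n q p := by
  obtain ⟨d, h1, h2⟩ := h; exact ⟨d, h2, h1⟩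

lemma sc (hn : 3 ≤ n) : ∀ m p q, Step n m p → Step n m q → Jn n p q := by
  rintro m p q ⟨c₁, a₁, b₁, hr₁, h₁, rfl⟩ ⟨c₂, a₂, b₂, hr₂, h₂, rfl⟩
  have e0 : 0 % (n+1) = 0 := Nat.mod_eq_of_lt (by omega)
  have e1 : 1 % (n+1) = 1 := Nat.mod_eq_of_lt (by omega)
  have e2 : 2 % (n+1) = 2 := Nat.mod_eq_of_lt (by omega)
  have e3 : 3 % (n+1) = 3 := Nat.mod_eq_of_lt (by omega)
  cases hr₁ with
  | A =>
    cases hr₂ with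
    | A => exact sc_same h₁ h₂
    | B => exact sc_AB hn h₁ h₂
    | C k h3 hk =>
      have ek : k % (n+1) = k := Nat.mod_eq_of_lt (by omega)
      refine H_disj Rule.A (Rule.C k h3 hk) h₁ h₂ ?_
      intro x hx
      simp only [Finsupp.add_apply, sv_apply', e1, ek] at hx ⊢
      split_ifs at hx ⊢ <;> omega
    | D =>
      refine H_disj Rule.A Rule.D h₁ h₂ ?_
      intro x hx
      simp only [Finsupp.add_apply, sv_apply', e0, e1, e2] at hx ⊢
      split_ifs at hx ⊢ <;> omega
  | B =>
    cases hr₂ with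
    | A => exact jn_swap (sc_AB hn h₂ h₁)
    | B => exact sc_same h₁ h₂
    | C k h3 hk =>
      have ek : k % (n+1) = k := Nat.mod_eq_of_lt (by omega)
      refine H_disj Rule.B (Rule.C k h3 hk) h₁ h₂ ?_
      intro x hx
      simp only [Finsupp.add_apply, sv_apply', e1, e2, ek] at hx ⊢
      split_ifs at hx ⊢ <;> omega
    | D => exact sc_BD hn h₁ h₂
  | C k h3 hk =>
    have ek : k % (n+1) = k := Nat.mod_eq_of_lt (by omega)
    cases hr₂ with
    | A =>
      refine jn_swap (H_disj Rule.A (Rule.C k h3 hk) h₂ h₁ ?_)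
      intro x hx
      simp only [Finsupp.add_apply, sv_apply', e1, ek] at hx ⊢
      split_ifs at hx ⊢ <;> omega
    | B =>
      refine jn_swap (H_disj Rule.B (Rule.C k h3 hk) h₂ h₁ ?_)
      intro x hx
      simp only [Finsupp.add_apply, sv_apply', e1, e2, ek] at hx ⊢
      split_ifs at hx ⊢ <;> omega
    | C k' h3' hk' =>
      by_cases hkk : k = k'
      · subst hkk
        exact sc_same h₁ h₂
      · have ek' : k' % (n+1) = k' := Nat.mod_eq_of_lt (by omega)
        refine H_disj (Rule.C k h3 hk) (Rule.C k' h3' hk') h₁ h₂ ?_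
        intro x hx
        simp only [Finsupp.add_apply, sv_apply', ek, ek'] at hx ⊢
        split_ifs at hx ⊢ <;> omega
    | D =>
      refine H_disj (Rule.C k h3 hk) Rule.D h₁ h₂ ?_
      intro x hx
      simp only [Finsupp.add_apply, sv_apply', e0, e2, ek] at hx ⊢
      split_ifs at hx ⊢ <;> omega
  | D =>
    cases hr₂ with
    | A =>
      refine jn_swap (H_disj Rule.A Rule.D h₂ h₁ ?_)
      intro x hx
      simp only [Finsupp.add_apply, sv_apply', e0, e1, e2] at hx ⊢
      split_ifs at hx ⊢ <;> omega
    | B => exact jn_swap (sc_BD hn h₂ h₁)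
    | C k h3 hk =>
      have ek : k % (n+1) = k := Nat.mod_eq_of_lt (by omega)
      refine jn_swap (H_disj (Rule.C k h3 hk) Rule.D h₂ h₁ ?_)
      intro x hx
      simp only [Finsupp.add_apply, sv_apply', e0, e2, ek] at hx ⊢
      split_ifs at hx ⊢ <;> omega
    | D => exact sc_same h₁ h₂

lemma join_of_eqvGen (hn : 3 ≤ n) {u v : Fin (n+1) →₀ ℕ}
    (h : Relation.EqvGen (Step n) u v) :
    Relation.Join (Relation.ReflTransGen (Step n)) u v := by
  have hcr : ∀ a b c, Step n a b → Step n a c →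
      ∃ d, Relation.ReflGen (Step n) b d ∧ Relation.ReflTransGen (Step n) c d := by
    intro a b c hab hac
    obtain ⟨d, h1, h2⟩ := sc hn a b c hab hac
    exact ⟨d, h1, h2.to_reflTransGen⟩
  have heq := Relation.equivalence_join_reflTransGen hcr
  refine heq.eqvGen_iff.mp ?_
  exact Relation.EqvGen.mono
    (fun a b hab => ⟨b, Relation.ReflTransGen.single hab, Relation.ReflTransGen.refl⟩) _ _ h

end SC2

end Aux17

namespace Aux17

open Finsupp Relation MvPolynomial
open scoped Classical

section Lam

variable {n : ℕ} (K : Type*) [Field K]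

noncomputable def Lam (P : (Fin (n+1) →₀ ℕ) → Prop) (f : MvPolynomial (Fin (n+1)) K) : K :=
  ∑ m ∈ f.support, if P m then MvPolynomial.coeff m f else 0

variable {K}

lemma Lam_eq_sum {P : (Fin (n+1) →₀ ℕ) → Prop} {f : MvPolynomial (Fin (n+1)) K}
    {s : Finset (Fin (n+1) →₀ ℕ)} (hs : f.support ⊆ s) :
    Lam K P f = ∑ m ∈ s, if P m then MvPolynomial.coeff m f else 0 :=
  Finset.sum_subset hs (fun x _ hx => by
    simp [MvPolynomial.notMem_support_iff.mp hx])

lemma Lam_add {P : (Fin (n+1) →₀ ℕ) → Prop} {f g : MvPolynomial (Fin (n+1)) K} :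
    Lam K P (f + g) = Lam K P f + Lam K P g := by
  rw [Lam_eq_sum (s := f.support ∪ g.support) (MvPolynomial.support_add),
    Lam_eq_sum (s := f.support ∪ g.support) (Finset.subset_union_left),
    Lam_eq_sum (s := f.support ∪ g.support) (Finset.subset_union_right),
    ← Finset.sum_add_distrib]
  refine Finset.sum_congr rfl fun m _ => ?_
  by_cases h : P m <;> simp [h, MvPolynomial.coeff_add]

lemma Lam_zero {P : (Fin (n+1) →₀ ℕ) → Prop} : Lam K P (0 : MvPolynomial (Fin (n+1)) K) = 0 := by
  simp [Lam]

lemma Lam_neg {P : (Fin (n+1) →₀ ℕ) → Prop} {f : MvPolynomial (Fin (n+1)) K} :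
    Lam K P (-f) = - Lam K P f := by
  rw [Lam, Lam, MvPolynomial.support_neg, ← Finset.sum_neg_distrib]
  refine Finset.sum_congr rfl fun m _ => ?_
  by_cases h : P m <;> simp [h]

lemma Lam_sub {P : (Fin (n+1) →₀ ℕ) → Prop} {f g : MvPolynomial (Fin (n+1)) K} :
    Lam K P (f - g) = Lam K P f - Lam K P g := by
  rw [sub_eq_add_neg, Lam_add, Lam_neg, sub_eq_add_neg]

lemma Lam_monomial {P : (Fin (n+1) →₀ ℕ) → Prop} (u : Fin (n+1) →₀ ℕ) (c : K) :
    Lam K P (monomial u c) = if P u then c else 0 := by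
  by_cases hc : c = 0
  · simp [Lam, hc]
  · rw [Lam, MvPolynomial.support_monomial, if_neg hc, Finset.sum_singleton,
      MvPolynomial.coeff_monomial, if_pos rfl]

lemma Lam_finsum {P : (Fin (n+1) →₀ ℕ) → Prop} {ι : Type*} (t : Finset ι)
    (g : ι → MvPolynomial (Fin (n+1)) K) :
    Lam K P (∑ i ∈ t, g i) = ∑ i ∈ t, Lam K P (g i) := by
  classical
  induction t using Finset.cons_induction with
  | empty => simp [Lam_zero]
  | cons i t hi ih => rw [Finset.sum_cons, Finset.sum_cons, Lam_add, ih]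

lemma Lam_monomial_mul {P : (Fin (n+1) →₀ ℕ) → Prop} (u : Fin (n+1) →₀ ℕ) (c : K)
    (f : MvPolynomial (Fin (n+1)) K) :
    Lam K P (monomial u c * f) = c * Lam K (fun m => P (u + m)) f := by
  conv_lhs => rw [f.as_sum, Finset.mul_sum]
  simp_rw [MvPolynomial.monomial_mul]
  rw [Lam_finsum]
  simp_rw [Lam_monomial]
  rw [Lam, Finset.mul_sum]
  refine Finset.sum_congr rfl fun m _ => ?_
  by_cases h : P (u + m) <;> simp [h]

def SInv (n : ℕ) (P : (Fin (n+1) →₀ ℕ) → Prop) : Prop :=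
  ∀ u v, Step n u v → (P u ↔ P v)

lemma SInv_shift {P : (Fin (n+1) →₀ ℕ) → Prop} (hP : SInv n P) (u : Fin (n+1) →₀ ℕ) :
    SInv n (fun m => P (u + m)) :=
  fun a b hab => hP _ _ (step_shift u hab)

end Lam


section Gen

variable {n : ℕ} {K : Type*} [Field K]

lemma X_mul_X_eq (x y : Fin (n+1)) :
    (X x * X y : MvPolynomial (Fin (n+1)) K) =
      monomial (Finsupp.single x 1 + Finsupp.single y 1) 1 := by
  rw [← pow_one (X x), ← pow_one (X y), X_pow_eq_monomial, X_pow_eq_monomial,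
    MvPolynomial.monomial_mul, one_mul]

/-- every generator of the Hankel edge ideal of `T1graph` is `x^b - x^a` for a rule `(a,b)` -/
lemma gen_eq (hn : 3 ≤ n) {g : MvPolynomial (Fin (n+1)) K}
    (hg' : g ∈ hgenSet n K (T1graph n)) :
    ∃ a b, Rule n a b ∧ g = monomial b 1 - monomial a 1 := by
  obtain ⟨i, j, hij, hadj, rfl⟩ := hg'
  rw [T1graph, SimpleGraph.fromRel_adj] at hadj
  obtain ⟨hne, hrel⟩ := hadj
  have hij' : (i : ℕ) < (j : ℕ) := hij
  have hrel' : ((i : ℕ) = 0 ∧ (j : ℕ) = 1) ∨ ((i : ℕ) = 0 ∧ (j : ℕ) = 2) ∨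
      (2 ≤ (i : ℕ) ∧ (j : ℕ) = (i : ℕ) + 1) := by
    rcases hrel with h | h
    · exact h
    · rcases h with ⟨h1, h2⟩ | ⟨h1, h2⟩ | ⟨h1, h2⟩ <;> omega
  have hjn : (j : ℕ) < n := j.isLt
  rw [hg, X_mul_X_eq, X_mul_X_eq]
  rcases hrel' with ⟨h1, h2⟩ | ⟨h1, h2⟩ | ⟨h1, h2⟩
  · refine ⟨_, _, Rule.A (n := n), ?_⟩
    rw [single_eq_sv (x := i.castSucc) (k := 0) (by omega) (by simp [h1]),
      single_eq_sv (x := j.succ) (k := 2) (by omega) (by simp [h2]),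
      single_eq_sv (x := j.castSucc) (k := 1) (by omega) (by simp [h2]),
      single_eq_sv (x := i.succ) (k := 1) (by omega) (by simp [h1])]
  · refine ⟨_, _, Rule.B (n := n), ?_⟩
    rw [single_eq_sv (x := i.castSucc) (k := 0) (by omega) (by simp [h1]),
      single_eq_sv (x := j.succ) (k := 3) (by omega) (by simp [h2]),
      single_eq_sv (x := j.castSucc) (k := 2) (by omega) (by simp [h2]),
      single_eq_sv (x := i.succ) (k := 1) (by omega) (by simp [h1]),
      show sv n 2 + sv n 1 = sv n 1 + sv n 2 from add_comm _ _]
  · refine ⟨_, _, Rule.C ((i : ℕ)+1) (by omega) (by omega), ?_⟩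
    rw [single_eq_sv (x := i.castSucc) (k := (i:ℕ)) (by omega) (by simp),
      single_eq_sv (x := j.succ) (k := (i:ℕ)+2) (by omega) (by simp [h2]),
      single_eq_sv (x := j.castSucc) (k := (i:ℕ)+1) (by omega) (by simp [h2]),
      single_eq_sv (x := i.succ) (k := (i:ℕ)+1) (by omega) (by simp),
      show (i:ℕ)+1-1 = (i:ℕ) from rfl, show (i:ℕ)+1+1 = (i:ℕ)+2 from rfl]

/-- The main vanishing lemma: `Lam P` kills the ideal, for any `Step`-invariant `P`. -/
lemma Lam_eq_zero (hn : 3 ≤ n) {f : MvPolynomial (Fin (n+1)) K}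
    (hf : f ∈ hankelIdeal n K (T1graph n)) :
    ∀ P, SInv n P → Lam K P f = 0 := by
  rw [hankelIdeal, Ideal.span] at hf
  induction hf using Submodule.span_induction with
  | mem g hgmem =>
    intro P hP
    obtain ⟨a, b, hr, rfl⟩ := gen_eq hn hgmem
    rw [Lam_sub, Lam_monomial, Lam_monomial]
    have hPab : P a ↔ P b := hP a b ⟨0, a, b, hr, (zero_add a).symm, (zero_add b).symm⟩
    by_cases h : P a
    · rw [if_pos (hPab.mp h), if_pos h, sub_self]
    · rw [if_neg (fun hb => h (hPab.mpr hb)), if_neg h, sub_self]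
  | zero => intro P hP; exact Lam_zero
  | add x y hx hy ihx ihy => intro P hP; rw [Lam_add, ihx P hP, ihy P hP, add_zero]
  | smul a x hx ih =>
    intro P hP
    rw [smul_eq_mul]
    induction a using MvPolynomial.induction_on' with
    | monomial u c =>
      rw [Lam_monomial_mul, ih _ (SInv_shift hP u), mul_zero]
    | add p q ihp ihq =>
      rw [add_mul, Lam_add, ihp, ihq, add_zero]

/-- if `m` is a normal monomial and is ≥ everything in the support of `f ∈ I`,
then its coefficient vanishes -/
lemma coeff_eq_zero_of_normal (hn : 3 ≤ n) {f : MvPolynomial (Fin (n+1)) K}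
    (hf : f ∈ hankelIdeal n K (T1graph n)) (m : Fin (n+1) →₀ ℕ)
    (hnorm : ∀ a b, Rule n a b → ¬ a ≤ m)
    (hlead : ∀ m' ∈ f.support, m' = m ∨ revLexLT m' m) :
    MvPolynomial.coeff m f = 0 := by
  have hstep : ∀ v, ¬ Step n m v := by
    rintro v ⟨c, a, b, hr, hm, -⟩
    exact hnorm a b hr (hm ▸ le_add_self)
  have h0 := Lam_eq_zero hn hf (fun m' => Relation.EqvGen (Step n) m' m) ?_
  swap
  · intro u v huv
    constructor
    · intro h
      exact Relation.EqvGen.trans _ _ _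
        (Relation.EqvGen.symm _ _ (Relation.EqvGen.rel _ _ huv)) h
    · intro h
      exact Relation.EqvGen.trans _ _ _ (Relation.EqvGen.rel _ _ huv) h
  rw [Lam] at h0
  have hsum : ∀ m' ∈ f.support,
      (if Relation.EqvGen (Step n) m' m then MvPolynomial.coeff m' f else 0) =
        if m = m' then MvPolynomial.coeff m' f else 0 := by
    intro m' hm'
    congr 1
    simp only [eq_iff_iff]
    constructor
    · intro h
      obtain ⟨d, h1, h2⟩ := join_of_eqvGen hn h
      have hd : d = m := by
        rcases Relation.ReflTransGen.cases_head h2 with h | ⟨c, hc, -⟩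
        · exact h.symm
        · exact absurd hc (hstep c)
      subst hd
      rcases rtg_lt hn h1 with h | h
      · exact h.symm
      · rcases hlead m' hm' with h' | h'
        · exact h'.symm
        · exact absurd h' (rl_asymm h)
    · rintro rfl
      exact Relation.EqvGen.refl m
  rw [Finset.sum_congr rfl hsum, Finset.sum_ite_eq] at h0
  by_cases hm : m ∈ f.support
  · rwa [if_pos hm] at h0
  · exact MvPolynomial.notMem_support_iff.mp hm

end Gen


section Lead

variable {n : ℕ} {K : Type*} [Field K]

lemma support_bin {u v : Fin (n+1) →₀ ℕ} (huv : u ≠ v) {c d : K} (hc : c ≠ 0) (hd : d ≠ 0) :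
    (monomial u c - monomial v d).support = {u, v} := by
  ext m
  rw [MvPolynomial.mem_support_iff, MvPolynomial.coeff_sub, MvPolynomial.coeff_monomial,
    MvPolynomial.coeff_monomial]
  constructor
  · intro h
    by_cases h1 : u = m
    · exact Finset.mem_insert.mpr (Or.inl h1.symm)
    · by_cases h2 : v = m
      · exact Finset.mem_insert.mpr (Or.inr (by simp [h2.symm]))
      · simp [h1, h2] at h
  · intro h
    rcases Finset.mem_insert.mp h with rfl | h
    · rw [if_pos rfl, if_neg (fun h' => huv h'.symm), sub_zero]; exact hc
    · rw [Finset.mem_singleton] at h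
      subst h
      rw [if_neg huv, if_pos rfl, zero_sub]
      exact neg_ne_zero.mpr hd

lemma isLead_of {f : MvPolynomial (Fin (n+1)) K} {u v : Fin (n+1) →₀ ℕ}
    (hlt : revLexLT v u) (hsupp : f.support = {u, v}) : IsLeadMonomial f u := by
  constructor
  · rw [hsupp]; exact Finset.mem_insert_self u _
  · intro m' hm'
    rw [hsupp] at hm'
    rcases Finset.mem_insert.mp hm' with rfl | hm'
    · exact Or.inl rfl
    · rw [Finset.mem_singleton] at hm'
      subst hm'
      exact Or.inr hlt

lemma isLead_unique {f : MvPolynomial (Fin (n+1)) K} {m m' : Fin (n+1) →₀ ℕ}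
    (h : IsLeadMonomial f m) (h' : IsLeadMonomial f m') : m' = m := by
  rcases h.2 m' h'.1 with h1 | h1
  · exact h1
  · rcases h'.2 m h.1 with h2 | h2
    · exact h2.symm
    · exact absurd h2 (rl_asymm h1)

lemma rule_ne {a b : Fin (n+1) →₀ ℕ} (hn : 3 ≤ n) (hr : Rule n a b) : b ≠ a := by
  intro h
  have h' := rule_lt hn hr
  rw [h] at h'
  exact rl_irrefl a h'

/-- leading monomial of the binomial `x^b - x^a` where `(a,b)` is a rule: it is `a`. -/
lemma isLead_rule {a b : Fin (n+1) →₀ ℕ} (hn : 3 ≤ n) (hr : Rule n a b) :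
    IsLeadMonomial (monomial b 1 - monomial a (1:K)) a := by
  refine isLead_of (rule_lt hn hr) ?_
  rw [support_bin (rule_ne hn hr) one_ne_zero one_ne_zero]
  exact Finset.pair_comm b a

end Lead

section Literals

variable {n : ℕ}

lemma lv0 : ((0 : Fin (n+1)) : ℕ) = 0 := rfl

lemma lv1 (hn : 3 ≤ n) : ((1 : Fin (n+1)) : ℕ) = 1 := by
  have := @Fin.val_cast_of_lt (n+1) _ 1 (by omega)
  exact this

lemma lv2 (hn : 3 ≤ n) : ((2 : Fin (n+1)) : ℕ) = 2 := by
  have := @Fin.val_cast_of_lt (n+1) _ 2 (by omega)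
  exact this

lemma lv3 (hn : 3 ≤ n) : ((3 : Fin (n+1)) : ℕ) = 3 := by
  have := @Fin.val_cast_of_lt (n+1) _ 3 (by omega)
  exact this

variable {K : Type*} [Field K]

lemma eqA (hn : 3 ≤ n) : (X 1 ^ 2 : MvPolynomial (Fin (n+1)) K) =
    monomial (sv n 1 + sv n 1) 1 := by
  rw [X_pow_eq_monomial, show (2:ℕ) = 1 + 1 from rfl, Finsupp.single_add,
    single_eq_sv (by omega) (lv1 hn)]

lemma eqB (hn : 3 ≤ n) : (X 1 * X 2 : MvPolynomial (Fin (n+1)) K) =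
    monomial (sv n 1 + sv n 2) 1 := by
  rw [X_mul_X_eq, single_eq_sv (by omega) (lv1 hn), single_eq_sv (by omega) (lv2 hn)]

lemma eqD (hn : 3 ≤ n) : (X 0 * X 2 ^ 2 : MvPolynomial (Fin (n+1)) K) =
    monomial (sv n 0 + (sv n 2 + sv n 2)) 1 := by
  rw [X_pow_eq_monomial, show (2:ℕ) = 1 + 1 from rfl, Finsupp.single_add,
    single_eq_sv (by omega) (lv2 hn), ← pow_one (X 0), X_pow_eq_monomial,
    single_eq_sv (by omega) lv0, MvPolynomial.monomial_mul, one_mul]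

lemma eqC {k : ℕ} (hk : k < n + 1) (x : Fin (n+1)) (hx : (x : ℕ) = k) :
    (X x ^ 2 : MvPolynomial (Fin (n+1)) K) = monomial (sv n k + sv n k) 1 := by
  rw [X_pow_eq_monomial, show (2:ℕ) = 1 + 1 from rfl, Finsupp.single_add,
    single_eq_sv hk hx]

lemma eqH (hn : 3 ≤ n) : (X 0 * X 1 * X 3 - X 0 * X 2 ^ 2 : MvPolynomial (Fin (n+1)) K) =
    monomial (sv n 0 + (sv n 1 + sv n 3)) 1 - monomial (sv n 0 + (sv n 2 + sv n 2)) 1 := by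
  rw [eqD hn, X_mul_X_eq, ← pow_one (X 3), X_pow_eq_monomial, MvPolynomial.monomial_mul, one_mul,
    single_eq_sv (by omega) lv0, single_eq_sv (by omega) (lv1 hn),
    single_eq_sv (by omega) (lv3 hn), add_assoc]

end Literals


section HgForms

variable {n : ℕ} {K : Type*} [Field K]

lemma hgA (hn : 3 ≤ n) (h0 : 0 < n) (h1 : 1 < n) :
    hg n K ⟨0, h0⟩ ⟨1, h1⟩ =
      monomial (sv n 0 + sv n 2) 1 - monomial (sv n 1 + sv n 1) 1 := by
  rw [hg, X_mul_X_eq, X_mul_X_eq,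
    single_eq_sv (x := (⟨0, h0⟩ : Fin n).castSucc) (k := 0) (by omega) (by simp),
    single_eq_sv (x := (⟨1, h1⟩ : Fin n).succ) (k := 2) (by omega) (by simp),
    single_eq_sv (x := (⟨1, h1⟩ : Fin n).castSucc) (k := 1) (by omega) (by simp),
    single_eq_sv (x := (⟨0, h0⟩ : Fin n).succ) (k := 1) (by omega) (by simp)]

lemma hgB (hn : 3 ≤ n) (h0 : 0 < n) (h2 : 2 < n) :
    hg n K ⟨0, h0⟩ ⟨2, h2⟩ =
      monomial (sv n 0 + sv n 3) 1 - monomial (sv n 1 + sv n 2) 1 := by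
  rw [hg, X_mul_X_eq, X_mul_X_eq,
    single_eq_sv (x := (⟨0, h0⟩ : Fin n).castSucc) (k := 0) (by omega) (by simp),
    single_eq_sv (x := (⟨2, h2⟩ : Fin n).succ) (k := 3) (by omega) (by simp),
    single_eq_sv (x := (⟨2, h2⟩ : Fin n).castSucc) (k := 2) (by omega) (by simp),
    single_eq_sv (x := (⟨0, h0⟩ : Fin n).succ) (k := 1) (by omega) (by simp),
    show sv n 2 + sv n 1 = sv n 1 + sv n 2 from add_comm _ _]

lemma hgC (hn : 3 ≤ n) (i j : Fin n) (k : ℕ) (h3 : 3 ≤ k)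
    (hi : (i : ℕ) = k - 1) (hj : (j : ℕ) = k) :
    hg n K i j =
      monomial (sv n (k-1) + sv n (k+1)) 1 - monomial (sv n k + sv n k) 1 := by
  have hkn : k < n := hj ▸ j.isLt
  rw [hg, X_mul_X_eq, X_mul_X_eq,
    single_eq_sv (x := i.castSucc) (k := k-1) (by omega) (by simp [hi]),
    single_eq_sv (x := j.succ) (k := k+1) (by omega) (by simp [hj]),
    single_eq_sv (x := j.castSucc) (k := k) (by omega) (by simp [hj]),
    single_eq_sv (x := i.succ) (k := k) (by omega) (by simp [hi]; omega)]

lemma leadC (hn : 3 ≤ n) (i j : Fin n) (k : ℕ) (h3 : 3 ≤ k)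
    (hi : (i : ℕ) = k - 1) (hj : (j : ℕ) = k) :
    IsLeadMonomial (hg n K i j) (sv n k + sv n k) := by
  have hkn : k < n := hj ▸ j.isLt
  rw [hgC hn i j k h3 hi hj]
  exact isLead_rule hn (Rule.C k h3 (by omega))

lemma memA (hn : 3 ≤ n) (h0 : 0 < n) (h1 : 1 < n) :
    hg n K ⟨0, h0⟩ ⟨1, h1⟩ ∈ hgenSet n K (T1graph n) := by
  refine ⟨⟨0, h0⟩, ⟨1, h1⟩, by simp [Fin.lt_def], ?_, rfl⟩
  rw [T1graph, SimpleGraph.fromRel_adj]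
  exact ⟨by simp [Fin.ext_iff], Or.inl (Or.inl ⟨rfl, rfl⟩)⟩

lemma memB (hn : 3 ≤ n) (h0 : 0 < n) (h2 : 2 < n) :
    hg n K ⟨0, h0⟩ ⟨2, h2⟩ ∈ hgenSet n K (T1graph n) := by
  refine ⟨⟨0, h0⟩, ⟨2, h2⟩, by simp [Fin.lt_def], ?_, rfl⟩
  rw [T1graph, SimpleGraph.fromRel_adj]
  exact ⟨by simp [Fin.ext_iff], Or.inl (Or.inr (Or.inl ⟨rfl, rfl⟩))⟩

lemma memC (i j : Fin n) (h2 : 2 ≤ (i : ℕ)) (hj : (j : ℕ) = (i : ℕ) + 1) :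
    hg n K i j ∈ hgenSet n K (T1graph n) := by
  refine ⟨i, j, by rw [Fin.lt_def]; omega, ?_, rfl⟩
  rw [T1graph, SimpleGraph.fromRel_adj]
  exact ⟨fun h => by subst h; omega, Or.inl (Or.inr (Or.inr ⟨h2, hj⟩))⟩

end HgForms

end Aux17

open Aux17

/-- (0-indexed: `x_k` is `X (k-1)`.) The set
`{x_1x_2x_4 - x_1x_3², g_{12}, g_{13}, g_{i,i+1} (3 ≤ i ≤ n-1)}` is a Gröbner basis of
`I_{T₁}` w.r.t. the reverse lexicographic order, and hence
`ini(I_{T₁}) = (x_2x_3, x_1x_3², x_2², x_{i+1}² : 3 ≤ i ≤ n-1)`. -/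
theorem stmt_17 (n : ℕ) (K : Type*) [Field K] (hn : 3 ≤ n) :
    IsGroebnerBasis K
      ({X 0 * X 1 * X 3 - X 0 * X 2 ^ 2,
        hg n K ⟨0, by omega⟩ ⟨1, by omega⟩,
        hg n K ⟨0, by omega⟩ ⟨2, by omega⟩} ∪
        { f | ∃ i j : Fin n, 2 ≤ (i : ℕ) ∧ (j : ℕ) = (i : ℕ) + 1 ∧ f = hg n K i j })
      (hankelIdeal n K (T1graph n)) ∧
    initialIdeal K (hankelIdeal n K (T1graph n)) =
      Ideal.span ({X 1 * X 2, X 0 * X 2 ^ 2, X 1 ^ 2} ∪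
        { p | ∃ k : Fin (n + 1), 3 ≤ (k : ℕ) ∧ (k : ℕ) ≤ n - 1 ∧ p = X k ^ 2 }) := by
  have h0n : 0 < n := by omega
  have h1n : 1 < n := by omega
  have h2n : 2 < n := by omega
  -- the ambient ideal
  set I := hankelIdeal n K (T1graph n) with hI
  -- membership of the special cubic binomial
  have hIA : hg n K ⟨0, h0n⟩ ⟨1, h1n⟩ ∈ I := Ideal.subset_span (memA hn h0n h1n)
  have hIB : hg n K ⟨0, h0n⟩ ⟨2, h2n⟩ ∈ I := Ideal.subset_span (memB hn h0n h2n)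
  have c0 : ((⟨0, h0n⟩ : Fin n).castSucc) = (0 : Fin (n+1)) := Fin.ext (by simp [lv0])
  have c1 : ((⟨1, h1n⟩ : Fin n).castSucc) = (1 : Fin (n+1)) := Fin.ext (by rw [lv1 hn]; simp)
  have c2' : ((⟨2, h2n⟩ : Fin n).castSucc) = (2 : Fin (n+1)) := Fin.ext (by rw [lv2 hn]; simp)
  have s1 : ((⟨0, h0n⟩ : Fin n).succ) = (1 : Fin (n+1)) := Fin.ext (by rw [lv1 hn]; simp)
  have s2 : ((⟨1, h1n⟩ : Fin n).succ) = (2 : Fin (n+1)) := Fin.ext (by rw [lv2 hn]; simp)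
  have s3 : ((⟨2, h2n⟩ : Fin n).succ) = (3 : Fin (n+1)) := Fin.ext (by rw [lv3 hn]; simp)
  have hIH : (X 0 * X 1 * X 3 - X 0 * X 2 ^ 2 : MvPolynomial (Fin (n+1)) K) ∈ I := by
    have hid : (X 0 * X 1 * X 3 - X 0 * X 2 ^ 2 : MvPolynomial (Fin (n+1)) K) =
        X 1 * hg n K ⟨0, h0n⟩ ⟨2, h2n⟩ - X 2 * hg n K ⟨0, h0n⟩ ⟨1, h1n⟩ := by
      rw [hg, hg, c0, c1, c2', s1, s2, s3]
      ring
    rw [hid]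
    exact sub_mem (Ideal.mul_mem_left _ _ hIB) (Ideal.mul_mem_left _ _ hIA)
  -- leading monomials
  have leadH : IsLeadMonomial (X 0 * X 1 * X 3 - X 0 * X 2 ^ 2 : MvPolynomial (Fin (n+1)) K)
      (sv n 0 + (sv n 2 + sv n 2)) := by
    rw [eqH hn]; exact isLead_rule hn Rule.D
  have leadA : IsLeadMonomial (hg n K ⟨0, h0n⟩ ⟨1, h1n⟩) (sv n 1 + sv n 1) := by
    rw [hgA hn h0n h1n]; exact isLead_rule hn Rule.A
  have leadB : IsLeadMonomial (hg n K ⟨0, h0n⟩ ⟨2, h2n⟩) (sv n 1 + sv n 2) := by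
    rw [hgB hn h0n h2n]; exact isLead_rule hn Rule.B
  -- the target monomial ideal generators, as a set
  set S₂ : Set (MvPolynomial (Fin (n+1)) K) :=
      ({X 1 * X 2, X 0 * X 2 ^ 2, X 1 ^ 2} ∪
        { p | ∃ k : Fin (n + 1), 3 ≤ (k : ℕ) ∧ (k : ℕ) ≤ n - 1 ∧ p = X k ^ 2 }) with hS₂
  -- main inclusion: the initial ideal is contained in span S₂
  have hini : initialIdeal K I = Ideal.span S₂ := by
    apply le_antisymm
    · rw [initialIdeal, Ideal.span_le]
      rintro p ⟨f, hfI, m, hm, rfl⟩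
      by_cases hdiv : ∃ a b, Rule n a b ∧ a ≤ m
      · obtain ⟨a, b, hr, hle⟩ := hdiv
        obtain ⟨c, hc⟩ := exists_add_of_le hle
        have hmono : (monomial m 1 : MvPolynomial (Fin (n+1)) K) =
            monomial c 1 * monomial a 1 := by
          rw [MvPolynomial.monomial_mul, one_mul, hc]
          exact congrArg (fun u => (monomial u (1:K) : MvPolynomial (Fin (n+1)) K)) (add_comm a c)
        show monomial m 1 ∈ Ideal.span S₂
        rw [hmono]
        apply Ideal.mul_mem_left
        apply Ideal.subset_span
        cases hr with
        | A =>
          rw [← eqA hn, hS₂]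
          exact Set.mem_union_left _ (by simp)
        | B =>
          rw [← eqB hn, hS₂]
          exact Set.mem_union_left _ (by simp)
        | C k h3 hk =>
          rw [← eqC (n := n) (by omega) ⟨k, by omega⟩ rfl, hS₂]
          exact Set.mem_union_right _ ⟨⟨k, by omega⟩, h3, hk, rfl⟩
        | D =>
          rw [← eqD hn, hS₂]
          exact Set.mem_union_left _ (by simp)
      · exfalso
        have h0 := coeff_eq_zero_of_normal hn hfI m
          (fun a b hr hle => hdiv ⟨a, b, hr, hle⟩) hm.2
        exact MvPolynomial.mem_support_iff.mp hm.1 h0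
    · rw [Ideal.span_le]
      rintro p hp
      apply Ideal.subset_span
      rw [hS₂] at hp
      rcases hp with hp | hp
      · rcases hp with rfl | rfl | rfl
        · exact ⟨_, hIB, _, leadB, (eqB hn)⟩
        · exact ⟨_, hIH, _, leadH, (eqD hn)⟩
        · exact ⟨_, hIA, _, leadA, (eqA hn)⟩
      · obtain ⟨k, hk3, hkn, rfl⟩ := hp
        refine ⟨hg n K ⟨(k : ℕ) - 1, by omega⟩ ⟨(k : ℕ), by omega⟩,
          Ideal.subset_span (memC _ _ (show 2 ≤ (k:ℕ) - 1 by omega)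
            (show (k:ℕ) = ((k:ℕ) - 1) + 1 by omega)), _,
          leadC hn _ _ (k : ℕ) hk3 rfl rfl, ?_⟩
        exact eqC (by omega) k rfl
  -- the span of the leading monomials of B equals span S₂
  have hspan : Ideal.span { p | ∃ f ∈
        ({X 0 * X 1 * X 3 - X 0 * X 2 ^ 2,
          hg n K ⟨0, by omega⟩ ⟨1, by omega⟩,
          hg n K ⟨0, by omega⟩ ⟨2, by omega⟩} ∪
          { f | ∃ i j : Fin n, 2 ≤ (i : ℕ) ∧ (j : ℕ) = (i : ℕ) + 1 ∧ f = hg n K i j } :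
            Set (MvPolynomial (Fin (n+1)) K)),
        ∃ m, IsLeadMonomial f m ∧ p = monomial m 1 } = Ideal.span S₂ := by
    apply le_antisymm
    · rw [Ideal.span_le]
      rintro p ⟨f, hfB, m, hm, rfl⟩
      apply Ideal.subset_span
      simp only [Set.mem_union, Set.mem_insert_iff, Set.mem_singleton_iff,
        Set.mem_setOf_eq] at hfB
      rcases hfB with (rfl | rfl | rfl) | ⟨i, j, h2i, hj, rfl⟩
      · rw [isLead_unique leadH hm, ← eqD hn, hS₂]
        exact Set.mem_union_left _ (by simp)
      · rw [isLead_unique leadA hm, ← eqA hn, hS₂]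
        exact Set.mem_union_left _ (by simp)
      · rw [isLead_unique leadB hm, ← eqB hn, hS₂]
        exact Set.mem_union_left _ (by simp)
      · have hlc := leadC (K := K) hn i j ((i : ℕ) + 1) (by omega) (by omega) (by omega)
        rw [isLead_unique hlc hm,
          ← eqC (n := n) (k := (i : ℕ) + 1) (by have := j.isLt; omega) ⟨(i : ℕ) + 1, by
            have := j.isLt; omega⟩ rfl, hS₂]
        refine Set.mem_union_right _ ⟨⟨(i : ℕ) + 1, by have := j.isLt; omega⟩,
          show 3 ≤ (i:ℕ) + 1 by omega,
          show (i:ℕ) + 1 ≤ n - 1 by have := j.isLt; omega, rfl⟩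
    · rw [Ideal.span_le]
      rintro p hp
      apply Ideal.subset_span
      rw [hS₂] at hp
      rcases hp with hp | hp
      · rcases hp with rfl | rfl | rfl
        · exact ⟨_, by simp, _, leadB, (eqB hn)⟩
        · exact ⟨_, by simp, _, leadH, (eqD hn)⟩
        · exact ⟨_, by simp, _, leadA, (eqA hn)⟩
      · obtain ⟨k, hk3, hkn, rfl⟩ := hp
        refine ⟨hg n K ⟨(k : ℕ) - 1, by omega⟩ ⟨(k : ℕ), by omega⟩,
          Set.mem_union_right _ ⟨⟨(k : ℕ) - 1, by omega⟩, ⟨(k : ℕ), by omega⟩,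
            show 2 ≤ (k:ℕ) - 1 by omega, show (k:ℕ) = ((k:ℕ) - 1) + 1 by omega, rfl⟩, _,
          leadC hn _ _ (k : ℕ) hk3 rfl rfl, ?_⟩
        exact eqC (by omega) k rfl
  refine ⟨⟨?_, hini.trans hspan.symm⟩, hini⟩
  -- B ⊆ I
  intro f hf
  simp only [Set.mem_union, Set.mem_insert_iff, Set.mem_singleton_iff,
    Set.mem_setOf_eq] at hf
  rcases hf with (rfl | rfl | rfl) | ⟨i, j, h2i, hj, rfl⟩
  · exact hIH
  · exact hIA
  · exact hIB
  · exact Ideal.subset_span (memC _ _ h2i hj)
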